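/- Suppose 0 < τ_1 ≤ ... ≤ τ_n, let j_B ∈ [n], fix k > j_B and S ≥ 0, and assume τ_i ≥ B for all i with j_B < i ≤ k, where B ≥ (S + j_B)/(∑_{i=1}^{j_B} 1/τ_i). Then (S + j_B)/(∑_{i=1}^{j_B} 1/τ_i) ≤ (S + k)/(∑_{i=1}^{k} 1/τ_i). -/
import Mathlib


theorem equilibrium_time_slow_worker_ineq (n : ℕ) (τ : ℕ → ℝ)
    (hpos : ∀ i ∈ Finset.Icc 1 n, 0 < τ i)
    (jB k : ℕ) (hjB : 1 ≤ jB) (hjBk : jB < k) (hk : k ≤ n)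
    (S : ℝ) (hS : 0 ≤ S) (B : ℝ)
    (hB : (S + jB) / (∑ i ∈ Finset.Icc 1 jB, 1 / τ i) ≤ B)
    (hslow : ∀ i, jB < i → i ≤ k → B ≤ τ i) :
    (S + jB) / (∑ i ∈ Finset.Icc 1 jB, 1 / τ i)
      ≤ (S + k) / (∑ i ∈ Finset.Icc 1 k, 1 / τ i) := by
  have hposk : ∀ i ∈ Finset.Icc 1 k, 0 < τ i := fun i hi => by
    refine hpos i ?_
    simp only [Finset.mem_Icc] at hi ⊢
    exact ⟨hi.1, hi.2.trans hk⟩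
  have hD : 0 < ∑ i ∈ Finset.Icc 1 jB, 1 / τ i := by
    apply Finset.sum_pos
    · intro i hi
      have : 0 < τ i := hposk i (by
        simp only [Finset.mem_Icc] at hi ⊢
        exact ⟨hi.1, hi.2.trans hjBk.le⟩)
      positivity
    · exact ⟨jB, by simp [hjB]⟩
  have hDk : 0 < ∑ i ∈ Finset.Icc 1 k, 1 / τ i := by
    apply Finset.sum_pos
    · intro i hi
      have := hposk i hi
      positivity
    · exact ⟨k, by simp [hjB.trans hjBk.le]⟩
  have hA : (0:ℝ) < S + jB := by
    have : (1:ℝ) ≤ (jB:ℝ) := by exact_mod_cast hjB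
    linarith
  have hB0 : 0 < B := lt_of_lt_of_le (div_pos hA hD) hB
  -- split the sum
  have hsplit : (∑ i ∈ Finset.Icc 1 k, 1 / τ i)
      = (∑ i ∈ Finset.Icc 1 jB, 1 / τ i) + ∑ i ∈ Finset.Ioc jB k, 1 / τ i := by
    rw [show Finset.Icc 1 k = Finset.Ioc 0 k from by ext i; simp [Nat.lt_iff_add_one_le],
        show Finset.Icc 1 jB = Finset.Ioc 0 jB from by ext i; simp [Nat.lt_iff_add_one_le],
        ← Finset.sum_Ioc_consecutive _ (Nat.zero_le jB) hjBk.le]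
  have hE : (∑ i ∈ Finset.Ioc jB k, 1 / τ i) ≤ (k - jB : ℕ) * (1 / B) := by
    rw [← nsmul_eq_mul, ← Nat.card_Ioc]
    apply Finset.sum_le_card_nsmul
    intro i hi
    simp only [Finset.mem_Ioc] at hi
    have hτB := hslow i hi.1 hi.2
    have hτ0 : 0 < τ i := hposk i (by simp [Finset.mem_Icc, hi.1.le, hi.2]; omega)
    exact one_div_le_one_div_of_le hB0 hτB
  have hABD : S + jB ≤ B * (∑ i ∈ Finset.Icc 1 jB, 1 / τ i) :=
    (div_le_iff₀ hD).mp hB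
  rw [div_le_div_iff₀ hD hDk, hsplit]
  have hkjB : ((k - jB : ℕ) : ℝ) = (k : ℝ) - jB := by
    push_cast [Nat.cast_sub hjBk.le]; ring
  rw [hkjB] at hE
  have hEB : (∑ i ∈ Finset.Ioc jB k, 1 / τ i) * B ≤ (k : ℝ) - jB := by
    rw [← le_div_iff₀ hB0]
    calc (∑ i ∈ Finset.Ioc jB k, 1 / τ i) ≤ ((k:ℝ) - jB) * (1/B) := hE
      _ = ((k:ℝ) - jB) / B := by ring
  have hE0 : 0 ≤ ∑ i ∈ Finset.Ioc jB k, 1 / τ i := by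
    apply Finset.sum_nonneg
    intro i hi
    simp only [Finset.mem_Ioc] at hi
    have := hposk i (by simp [Finset.mem_Icc, hi.2]; omega)
    positivity
  nlinarith [mul_le_mul_of_nonneg_left hEB hD.le,
    mul_le_mul_of_nonneg_left hABD hE0]
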